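/- Let h > 0 and let v, w ∈ ℝ³ be linearly independent. If the numerical wall W_w(v) is nonempty, then either there exist s ∈ ℝ and ρ > 0 such that W_w(v) = {(α, β) : α > 0 and α² + (β − s)² = ρ²} (a semicircle with center (0, s) on the β-axis), or there exists β₀ ∈ ℝ such that W_w(v) = {(α, β₀) : α > 0} (a vertical ray). -/
import Mathlib


namespace BridgelandNotes

/-- The central charge `Z_{α,β}(v)` for `v = (r, c, d)`, where `h` plays the role of
`H²`:  `Z_{α,β}(v) = (−d + β·c + ((α² − β²)/2)·h·r) + i·α·(c − β·h·r)`. -/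
noncomputable def centralCharge (h : ℝ) (v : ℝ × ℝ × ℝ) (α β : ℝ) : ℂ :=
  ⟨-v.2.2 + β * v.2.1 + ((α ^ 2 - β ^ 2) / 2) * h * v.1,
    α * (v.2.1 - β * h * v.1)⟩

/-- The numerical wall `W_w(v)` in the `(α, β)`-plane:
`{(α, β) : α > 0 and Re Z_{α,β}(v)·Im Z_{α,β}(w) = Re Z_{α,β}(w)·Im Z_{α,β}(v)}`. -/
noncomputable def numericalWall (h : ℝ) (v w : ℝ × ℝ × ℝ) : Set (ℝ × ℝ) :=
  {p : ℝ × ℝ | 0 < p.1 ∧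
    (centralCharge h v p.1 p.2).re * (centralCharge h w p.1 p.2).im =
      (centralCharge h w p.1 p.2).re * (centralCharge h v p.1 p.2).im}

/-- The discriminant `Δ̄(v) = c² − 2·h·r·d` for `v = (r, c, d)`. -/
def disc (h : ℝ) (v : ℝ × ℝ × ℝ) : ℝ := v.2.1 ^ 2 - 2 * h * v.1 * v.2.2

/-- Every nonempty numerical wall is either a semicircle with center on the `β`-axis
or a vertical ray. -/
theorem numericalWall_semicircle_or_vertical (h : ℝ) (hh : 0 < h)
    (v w : ℝ × ℝ × ℝ) (hvw : LinearIndependent ℝ ![v, w])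
    (hne : (numericalWall h v w).Nonempty) :
    (∃ s ρ : ℝ, 0 < ρ ∧
      numericalWall h v w =
        {p : ℝ × ℝ | 0 < p.1 ∧ p.1 ^ 2 + (p.2 - s) ^ 2 = ρ ^ 2}) ∨
    (∃ β₀ : ℝ, numericalWall h v w = {p : ℝ × ℝ | 0 < p.1 ∧ p.2 = β₀}) := by
  obtain ⟨r, c, d⟩ := v
  obtain ⟨r', c', d'⟩ := w
  set A : ℝ := h * (r * c' - r' * c) / 2 with hA
  set B : ℝ := h * (r' * d - r * d') with hB
  set C : ℝ := c * d' - c' * d with hC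
  have key : ∀ p : ℝ × ℝ, p ∈ numericalWall h (r, c, d) (r', c', d') ↔
      0 < p.1 ∧ A * (p.1 ^ 2 + p.2 ^ 2) + B * p.2 + C = 0 := by
    intro p
    have hid : (centralCharge h (r, c, d) p.1 p.2).re *
          (centralCharge h (r', c', d') p.1 p.2).im -
        (centralCharge h (r', c', d') p.1 p.2).re *
          (centralCharge h (r, c, d) p.1 p.2).im =
        p.1 * (A * (p.1 ^ 2 + p.2 ^ 2) + B * p.2 + C) := by
      simp only [centralCharge, hA, hB, hC]
      ring
    constructor
    · rintro ⟨hp, heq⟩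
      refine ⟨hp, ?_⟩
      have h0 : p.1 * (A * (p.1 ^ 2 + p.2 ^ 2) + B * p.2 + C) = 0 := by
        rw [← hid]; linarith
      rcases mul_eq_zero.1 h0 with h1 | h1
      · exact absurd h1 hp.ne'
      · exact h1
    · rintro ⟨hp, heq⟩
      refine ⟨hp, ?_⟩
      have : (centralCharge h (r, c, d) p.1 p.2).re *
          (centralCharge h (r', c', d') p.1 p.2).im -
        (centralCharge h (r', c', d') p.1 p.2).re *
          (centralCharge h (r, c, d) p.1 p.2).im = 0 := by
        rw [hid, heq]; ring
      linarith
  by_cases hA0 : A = 0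
  · by_cases hB0 : B = 0
    · exfalso
      obtain ⟨p0, hp0⟩ := hne
      have hC0 : C = 0 := by
        have := (key p0).1 hp0
        rw [hA0, hB0] at this
        linarith [this.2]
      have m1 : r * c' - r' * c = 0 := by
        have := hA0; rw [hA] at this
        have h2 : h * (r * c' - r' * c) = 0 := by linarith
        exact (mul_eq_zero.1 h2).resolve_left hh.ne'
      have m2 : r' * d - r * d' = 0 := by
        rw [hB] at hB0
        exact (mul_eq_zero.1 hB0).resolve_left hh.ne'
      have m3 : c * d' - c' * d = 0 := hC0
      rw [LinearIndependent.pair_iff] at hvw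
      by_cases hr : r = 0
      · by_cases hc : c = 0
        · by_cases hd : d = 0
          · have := (hvw 1 0 (by
              simp [Prod.ext_iff, hr, hc, hd])).1
            norm_num at this
          · have := (hvw d' (-d) (by
              simp only [Prod.smul_mk, Prod.mk_add_mk, smul_eq_mul, Prod.mk_eq_zero]
              refine ⟨by nlinarith, by nlinarith, by ring⟩)).2
            simp at this
            exact hd this
        · have := (hvw c' (-c) (by
            simp only [Prod.smul_mk, Prod.mk_add_mk, smul_eq_mul, Prod.mk_eq_zero]
            refine ⟨by nlinarith, by ring, by nlinarith⟩)).2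
          simp at this
          exact hc this
      · have := (hvw r' (-r) (by
          simp only [Prod.smul_mk, Prod.mk_add_mk, smul_eq_mul, Prod.mk_eq_zero]
          refine ⟨by ring, by nlinarith, by nlinarith⟩)).2
        simp at this
        exact hr this
    · -- vertical ray
      right
      refine ⟨-C / B, ?_⟩
      ext p
      rw [key]
      constructor
      · rintro ⟨hp, heq⟩
        refine ⟨hp, ?_⟩
        rw [hA0] at heq
        field_simp
        linarith
      · rintro ⟨hp, heq⟩
        refine ⟨hp, ?_⟩
        rw [hA0]
        rw [heq]
        field_simp
        ring
  · -- semicircle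
    left
    obtain ⟨p0, hp0⟩ := hne
    set s : ℝ := -B / (2 * A) with hs
    have hiff : ∀ α β : ℝ, (A * (α ^ 2 + β ^ 2) + B * β + C = 0 ↔
        α ^ 2 + (β - s) ^ 2 = s ^ 2 - C / A) := by
      intro α β
      have hident : A * (α ^ 2 + β ^ 2) + B * β + C =
          A * ((α ^ 2 + (β - s) ^ 2) - (s ^ 2 - C / A)) := by
        rw [hs]; field_simp; ring
      rw [hident]
      constructor
      · intro hz
        have := (mul_eq_zero.1 hz).resolve_left hA0
        linarith
      · intro hz
        rw [hz]; ring
    obtain ⟨hp01, hp02⟩ := (key p0).1 hp0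
    have hρ2 : s ^ 2 - C / A = p0.1 ^ 2 + (p0.2 - s) ^ 2 := ((hiff p0.1 p0.2).1 hp02).symm
    have hρpos : 0 < s ^ 2 - C / A := by
      rw [hρ2]; positivity
    refine ⟨s, Real.sqrt (s ^ 2 - C / A), Real.sqrt_pos.2 hρpos, ?_⟩
    ext p
    rw [key]
    have hsq : Real.sqrt (s ^ 2 - C / A) ^ 2 = s ^ 2 - C / A :=
      Real.sq_sqrt hρpos.le
    constructor
    · rintro ⟨hp, heq⟩
      exact ⟨hp, by rw [hsq]; exact (hiff p.1 p.2).1 heq⟩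
    · rintro ⟨hp, heq⟩
      rw [hsq] at heq
      exact ⟨hp, (hiff p.1 p.2).2 heq⟩


end BridgelandNotes
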